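/- Let X be a Banach space and U ⊆ X be closed and convex. Then the topological interior of U equals its algebraic interior (core): U° = {x ∈ U : for all h ∈ X there exists δ > 0 such that x + t·h ∈ U for all t ∈ [0, δ]}. -/

import Mathlib

open Pointwise


/-- Core-int lemma: in a Banach space, the topological interior of a closed convex set
equals its algebraic interior (core). -/
theorem interior_eq_core {X : Type*} [NormedAddCommGroup X] [NormedSpace ℝ X]
    [CompleteSpace X] (U : Set X) (hclosed : IsClosed U) (hconv : Convex ℝ U) :
    interior U =
      {x ∈ U | ∀ h : X, ∃ δ > (0:ℝ), ∀ t ∈ Set.Icc (0:ℝ) δ, x + t • h ∈ U} := by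
  ext x
  constructor
  · intro hx
    refine ⟨interior_subset hx, fun h => ?_⟩
    rcases Metric.isOpen_iff.1 isOpen_interior x hx with ⟨ε, hε, hball⟩
    by_cases hh : h = 0
    · exact ⟨1, one_pos, fun t ht => by simpa [hh] using interior_subset hx⟩
    · have hnorm0 : (0:ℝ) < ‖h‖ := norm_pos_iff.2 hh
      refine ⟨ε / (2 * ‖h‖), by positivity, fun t ht => ?_⟩
      apply interior_subset
      apply hball
      rw [Metric.mem_ball, dist_eq_norm]
      have : ‖x + t • h - x‖ = t * ‖h‖ := by
        rw [add_sub_cancel_left, norm_smul, Real.norm_of_nonneg ht.1]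
      rw [this]
      have hnorm : (0:ℝ) < ‖h‖ := norm_pos_iff.2 hh
      calc t * ‖h‖ ≤ (ε / (2 * ‖h‖)) * ‖h‖ := by
            exact mul_le_mul_of_nonneg_right ht.2 hnorm.le
        _ = ε / 2 := by field_simp
        _ < ε := by linarith
  · rintro ⟨hxU, hcore⟩
    -- W = symmetric closed convex absorbing set around 0
    set W : Set X := {y | x + y ∈ U ∧ x - y ∈ U} with hW
    have hWclosed : IsClosed W := by
      apply IsClosed.inter
      · exact hclosed.preimage (continuous_const.add continuous_id)
      · exact hclosed.preimage (continuous_const.sub continuous_id)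
    have hW0 : (0:X) ∈ W := by simp [hW, hxU]
    have hWconv : Convex ℝ W := by
      intro a ha b hb s t hs ht hst
      constructor
      · have h1 := hconv ha.1 hb.1 hs ht hst
        have e : s • (x + a) + t • (x + b) = (s + t) • x + (s • a + t • b) := by
          rw [add_smul, smul_add, smul_add]; abel
        rw [e, hst, one_smul] at h1
        exact h1
      · have h1 := hconv ha.2 hb.2 hs ht hst
        have e : s • (x - a) + t • (x - b) = (s + t) • x - (s • a + t • b) := by
          rw [add_smul, smul_sub, smul_sub]; abel
        rw [e, hst, one_smul] at h1
        exact h1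
    have hWsymm : ∀ y ∈ W, -y ∈ W := by
      rintro y ⟨h1, h2⟩
      exact ⟨by simpa [sub_eq_add_neg] using h2, by simpa using h1⟩
    have hWshrink : ∀ s : ℝ, 0 ≤ s → s ≤ 1 → ∀ y ∈ W, s • y ∈ W := by
      intro s hs hs1 y hy
      have := hWconv hy hW0 hs (by linarith : (0:ℝ) ≤ 1 - s) (by ring)
      simpa using this
    have habs : ∀ y : X, ∃ t : ℝ, 0 < t ∧ t • y ∈ W := by
      intro y
      rcases hcore y with ⟨δ1, hδ1, h1⟩
      rcases hcore (-y) with ⟨δ2, hδ2, h2⟩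
      refine ⟨min δ1 δ2, lt_min hδ1 hδ2, ?_, ?_⟩
      · exact h1 _ ⟨(lt_min hδ1 hδ2).le, min_le_left _ _⟩
      · have := h2 _ ⟨(lt_min hδ1 hδ2).le, min_le_right _ _⟩
        simpa [sub_eq_add_neg] using this
    -- Baire category
    have hcover : (⋃ n : ℕ, ((n : ℝ) + 1) • W) = Set.univ := by
      ext y
      simp only [Set.mem_iUnion, Set.mem_univ, iff_true]
      rcases habs y with ⟨t, ht, htW⟩
      rcases exists_nat_gt (1 / t) with ⟨n, hn⟩
      have hn1 : (0:ℝ) < (n : ℝ) + 1 := by positivity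
      refine ⟨n, (((n:ℝ) + 1)⁻¹ • y), ?_, ?_⟩
      · have hle : ((n:ℝ) + 1)⁻¹ ≤ t := by
          rw [inv_le_comm₀ hn1 ht, ← one_div]
          exact le_of_lt (hn.trans (by linarith))
        have : ((n:ℝ) + 1)⁻¹ • y = (((n:ℝ) + 1)⁻¹ / t) • (t • y) := by
          rw [smul_smul]; congr 1; field_simp
        rw [this]
        exact hWshrink _ (by positivity) (by rw [div_le_one ht]; exact hle) _ htW
      · simp [smul_smul, mul_inv_cancel₀ hn1.ne']
    have hclosedn : ∀ n : ℕ, IsClosed (((n : ℝ) + 1) • W) := by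
      intro n
      have hn1 : ((n:ℝ) + 1) ≠ 0 := by positivity
      exact hWclosed.smul_of_ne_zero hn1
    obtain ⟨n, y0, hy0⟩ := nonempty_interior_of_iUnion_of_closed hclosedn hcover
    have hn1 : ((n:ℝ) + 1) ≠ 0 := by positivity
    rw [interior_smul₀ hn1] at hy0
    obtain ⟨w, hw, rfl⟩ := hy0
    -- w ∈ interior W, -w ∈ interior W, so 0 ∈ interior W
    have hnegw : -w ∈ interior W := by
      have : -w ∈ interior ((-1 : ℝ) • W) := by
        rw [interior_smul₀ (by norm_num : (-1:ℝ) ≠ 0)]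
        exact ⟨w, hw, by simp⟩
      have hsub : ((-1 : ℝ) • W) ⊆ W := by
        rintro z ⟨u, hu, rfl⟩
        simpa using hWsymm u hu
      exact interior_mono hsub this
    have h0int : (0:X) ∈ interior W := by
      have := hWconv.interior hw hnegw (le_of_lt one_half_pos)
        (le_of_lt one_half_pos) (by norm_num)
      simpa using this
    -- conclude
    have : W ∈ nhds (0:X) := mem_interior_iff_mem_nhds.1 h0int
    rw [mem_interior_iff_mem_nhds]
    have h2 : (fun y => y - x) ⁻¹' W ∈ nhds x := by
      have hc : ContinuousAt (fun y => y - x) x := (continuous_id.sub continuous_const).continuousAt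
      apply hc
      simpa using this
    refine Filter.mem_of_superset h2 fun y hy => ?_
    have : x + (y - x) ∈ U := hy.1
    simpa using this
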